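/- There exists an absolute constant C > 0 with the following property: for all continuously differentiable functions f, g : ℝ² → ℝ such that f, ∂₁f, g, ∂₂g all belong to L²(ℝ²), one has (∫_{ℝ²} |f(x) g(x)|² dx)^{1/2} ≤ C · ‖f‖_{L²}^{1/2} · ‖∂₁f‖_{L²}^{1/2} · ‖g‖_{L²}^{1/2} · ‖∂₂g‖_{L²}^{1/2}. -/

import Mathlib

open MeasureTheory Set intervalIntegral
open scoped ENNReal Interval

set_option maxHeartbeats 1000000

noncomputable section

/-- Partial derivative in the first coordinate of `ℝ²`. -/
def d1 (f : ℝ × ℝ → ℝ) : ℝ × ℝ → ℝ := fun x => deriv (fun s => f (s, x.2)) x.1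

/-- Partial derivative in the second coordinate of `ℝ²`. -/
def d2 (f : ℝ × ℝ → ℝ) : ℝ × ℝ → ℝ := fun x => deriv (fun s => f (x.1, s)) x.2

/-- The `L²(ℝ²)` norm, valued in `ℝ≥0∞`. -/
def L2e (f : ℝ × ℝ → ℝ) : ℝ≥0∞ := eLpNorm f 2 volume


lemma smallpoint (h : ℝ → ℝ) (hfin : ∫⁻ t, ENNReal.ofReal ((h t)^2) ≠ ∞) (ε : ℝ) (hε : 0 < ε) :
    ∃ y, (h y)^2 < ε := by
  by_contra hcon
  push_neg at hcon
  have : (∫⁻ t, ENNReal.ofReal ε ∂volume) ≤ ∫⁻ t, ENNReal.ofReal ((h t)^2) :=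
    lintegral_mono fun t => ENNReal.ofReal_le_ofReal (hcon t)
  rw [lintegral_const] at this
  have h1 : ENNReal.ofReal ε * volume (univ : Set ℝ) = ∞ := by
    rw [Real.volume_univ, ENNReal.mul_top]
    simp [ENNReal.ofReal_eq_zero, hε.not_ge]
  rw [h1, top_le_iff] at this
  exact hfin this

lemma oneD (h : ℝ → ℝ) (hc : ContDiff ℝ 1 h)
    (hfin : ∫⁻ t, ENNReal.ofReal ((h t)^2) ≠ ∞) (x : ℝ) :
    ENNReal.ofReal ((h x)^2) ≤ 2 * ∫⁻ t, ENNReal.ofReal |h t * deriv h t| := by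
  set I := ∫⁻ t, ENNReal.ofReal |h t * deriv h t| with hIdef
  by_cases hI : I = ∞
  · rw [hI]; simp
  have hcont : Continuous fun t => h t * deriv h t :=
    (hc.continuous).mul (hc.continuous_deriv le_rfl)
  have key : ∀ ε > (0:ℝ), (h x)^2 ≤ 2 * I.toReal + ε := by
    intro ε hε
    obtain ⟨y, hy⟩ := smallpoint h hfin ε hε
    have hder : ∀ t ∈ uIcc y x, HasDerivAt (fun s => h s ^ 2) (2 * h t * deriv h t) t := by
      intro t _
      have := ((hc.differentiable one_ne_zero t).hasDerivAt).pow 2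
      simpa [mul_comm, mul_assoc, Pi.pow_def] using this
    have hcont2 : Continuous fun t => 2 * h t * deriv h t :=
      (continuous_const.mul hc.continuous).mul (hc.continuous_deriv le_rfl)
    have hint : IntervalIntegrable (fun t => 2 * h t * deriv h t) volume y x :=
      hcont2.intervalIntegrable y x
    have hftc : ∫ t in y..x, 2 * h t * deriv h t = h x ^ 2 - h y ^ 2 :=
      integral_eq_sub_of_hasDerivAt hder hint
    -- bound the interval integral
    have habs : |∫ t in y..x, 2 * h t * deriv h t| ≤ ∫ t in Ι y x, |2 * h t * deriv h t| := by
      simpa [Real.norm_eq_abs, abs_mul] using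
        intervalIntegral.norm_integral_le_integral_norm_uIoc (a := y) (b := x)
          (f := fun t => 2 * h t * deriv h t) (μ := volume)
    -- compare the set integral with I.toReal
    have hset : ∫ t in Ι y x, |2 * h t * deriv h t| ≤ 2 * I.toReal := by
      have h2 : ∀ t, |2 * h t * deriv h t| = 2 * |h t * deriv h t| := by
        intro t; rw [mul_assoc, abs_mul]; simp
      calc ∫ t in Ι y x, |2 * h t * deriv h t|
          = 2 * ∫ t in Ι y x, |h t * deriv h t| := by
            simp_rw [h2]; exact MeasureTheory.integral_const_mul 2 _
        _ ≤ 2 * I.toReal := by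
            gcongr
            have heq : ∫ t in Ι y x, |h t * deriv h t|
                = (∫⁻ t in Ι y x, ENNReal.ofReal |h t * deriv h t|).toReal := by
              rw [integral_eq_lintegral_of_nonneg_ae (Filter.Eventually.of_forall fun t => abs_nonneg _)
                (hcont.abs.aestronglyMeasurable)]
            rw [heq]
            exact ENNReal.toReal_mono hI (setLIntegral_le_lintegral _ _)
    have : h x ^ 2 ≤ h y ^ 2 + |∫ t in y..x, 2 * h t * deriv h t| := by
      nlinarith [abs_nonneg (∫ t in y..x, 2 * h t * deriv h t),
        le_abs_self (∫ t in y..x, 2 * h t * deriv h t), hftc]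
    linarith [habs, hset, hy.le]
  have hreal : (h x)^2 ≤ 2 * I.toReal := le_of_forall_pos_le_add key
  calc ENNReal.ofReal ((h x)^2) ≤ ENNReal.ofReal (2 * I.toReal) :=
        ENNReal.ofReal_le_ofReal hreal
    _ = 2 * I := by
        rw [ENNReal.ofReal_mul (by norm_num), ENNReal.ofReal_toReal hI]
        norm_num



lemma slice1_contDiff (f : ℝ × ℝ → ℝ) (hf : ContDiff ℝ 1 f) (b : ℝ) :
    ContDiff ℝ 1 (fun s => f (s, b)) := hf.comp (contDiff_id.prodMk contDiff_const)

lemma slice2_contDiff (f : ℝ × ℝ → ℝ) (hf : ContDiff ℝ 1 f) (a : ℝ) :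
    ContDiff ℝ 1 (fun t => f (a, t)) := hf.comp (contDiff_const.prodMk contDiff_id)

lemma d1_eq (f : ℝ × ℝ → ℝ) (hf : ContDiff ℝ 1 f) (x : ℝ × ℝ) :
    d1 f x = fderiv ℝ f x (1, 0) := by
  have h1 : HasDerivAt (fun s => (s, x.2)) ((1:ℝ), (0:ℝ)) x.1 :=
    (hasDerivAt_id x.1).prodMk (hasDerivAt_const x.1 x.2)
  have h2 : HasDerivAt (fun s => f (s, x.2)) (fderiv ℝ f x (1, 0)) x.1 := by
    simpa [Function.comp_def] using ((hf.differentiable one_ne_zero x).hasFDerivAt.comp_hasDerivAt x.1 h1)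
  exact h2.deriv

lemma d2_eq (f : ℝ × ℝ → ℝ) (hf : ContDiff ℝ 1 f) (x : ℝ × ℝ) :
    d2 f x = fderiv ℝ f x (0, 1) := by
  have h1 : HasDerivAt (fun t => (x.1, t)) ((0:ℝ), (1:ℝ)) x.2 :=
    (hasDerivAt_const x.2 x.1).prodMk (hasDerivAt_id x.2)
  have h2 : HasDerivAt (fun t => f (x.1, t)) (fderiv ℝ f x (0, 1)) x.2 := by
    simpa [Function.comp_def] using ((hf.differentiable one_ne_zero x).hasFDerivAt.comp_hasDerivAt x.2 h1)
  exact h2.deriv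

lemma d1_continuous (f : ℝ × ℝ → ℝ) (hf : ContDiff ℝ 1 f) : Continuous (d1 f) := by
  have : Continuous fun x => fderiv ℝ f x (1, 0) :=
    (ContinuousLinearMap.apply ℝ ℝ ((1:ℝ), (0:ℝ))).continuous.comp
      (hf.continuous_fderiv one_ne_zero)
  exact this.congr fun x => (d1_eq f hf x).symm

lemma d2_continuous (f : ℝ × ℝ → ℝ) (hf : ContDiff ℝ 1 f) : Continuous (d2 f) := by
  have : Continuous fun x => fderiv ℝ f x (0, 1) :=
    (ContinuousLinearMap.apply ℝ ℝ ((0:ℝ), (1:ℝ))).continuous.comp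
      (hf.continuous_fderiv one_ne_zero)
  exact this.congr fun x => (d2_eq f hf x).symm

-- norm conversion
lemma enorm_sq_eq (a : ℝ) : ((‖a‖₊ : ℝ≥0∞)) ^ (2:ℝ) = ENNReal.ofReal (a^2) := by
  rw [← enorm_eq_nnnorm, ← ofReal_norm, Real.norm_eq_abs,
    ENNReal.ofReal_rpow_of_nonneg (abs_nonneg a) (by norm_num),
    show |a| ^ (2:ℝ) = a ^ 2 by
      rw [show (2:ℝ) = ((2:ℕ):ℝ) by norm_num, Real.rpow_natCast, sq_abs] ]

lemma memL2_lintegral (h : ℝ × ℝ → ℝ) (hm : MemLp h 2 volume) :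
    ∫⁻ x, ENNReal.ofReal ((h x)^2) ∂(volume : Measure (ℝ × ℝ)) ≠ ∞ := by
  have h2 := hm.2
  rw [eLpNorm_eq_lintegral_rpow_enorm_toReal (by norm_num) (by norm_num)] at h2
  have := (ENNReal.rpow_lt_top_iff_of_pos (y := (1:ℝ)/(2:ℝ≥0∞).toReal) (by norm_num)).mp h2
  simp only [ENNReal.toReal_ofNat] at this ⊢
  have heq : (∫⁻ x, ENNReal.ofReal ((h x)^2) ∂(volume : Measure (ℝ × ℝ)))
      = ∫⁻ x, ((‖h x‖₊ : ℝ≥0∞)) ^ (2:ℝ) ∂volume :=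
    lintegral_congr fun x => (enorm_sq_eq (h x)).symm
  rw [heq]
  exact this.ne

lemma eLpNorm_two_eq (h : ℝ × ℝ → ℝ) :
    eLpNorm h 2 volume = (∫⁻ x, ENNReal.ofReal ((h x)^2) ∂(volume : Measure (ℝ × ℝ))) ^ ((1:ℝ)/2) := by
  rw [eLpNorm_eq_lintegral_rpow_enorm_toReal (by norm_num) (by norm_num)]
  simp only [ENNReal.toReal_ofNat]
  congr 1
  exact lintegral_congr fun x => enorm_sq_eq (h x)

lemma ofReal_abs_sq (a : ℝ) : ENNReal.ofReal |a| ^ (2:ℝ) = ENNReal.ofReal (a^2) := by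
  rw [← Real.norm_eq_abs, ofReal_norm]
  exact enorm_sq_eq a

lemma holder_l2 {α : Type*} [MeasurableSpace α] (μ : Measure α) (u v : α → ℝ)
    (hu : Measurable u) (hv : Measurable v) :
    ∫⁻ x, ENNReal.ofReal |u x * v x| ∂μ
      ≤ (∫⁻ x, ENNReal.ofReal (u x ^ 2) ∂μ) ^ ((1:ℝ)/2)
        * (∫⁻ x, ENNReal.ofReal (v x ^ 2) ∂μ) ^ ((1:ℝ)/2) := by
  have hpq : Real.HolderConjugate 2 2 := Real.HolderConjugate.two_two
  have h1 : (∫⁻ x, ENNReal.ofReal |u x * v x| ∂μ)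
      = ∫⁻ x, ((fun x => ENNReal.ofReal |u x|) * fun x => ENNReal.ofReal |v x|) x ∂μ :=
    lintegral_congr fun x => by
      simp only [Pi.mul_apply]; rw [abs_mul, ENNReal.ofReal_mul (abs_nonneg _)]
  rw [h1]
  have h2 := ENNReal.lintegral_mul_le_Lp_mul_Lq μ hpq
    (hu.abs.ennreal_ofReal.aemeasurable) (hv.abs.ennreal_ofReal.aemeasurable)
  refine h2.trans (le_of_eq ?_)
  congr 1
  · congr 1
    exact lintegral_congr fun x => ofReal_abs_sq (u x)
  · congr 1
    exact lintegral_congr fun x => ofReal_abs_sq (v x)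

lemma four_rpow_half : (4 : ℝ≥0∞) ^ ((1:ℝ)/2) = 2 := by
  rw [show (4:ℝ≥0∞) = 2 ^ (2:ℕ) by norm_num, ← ENNReal.rpow_natCast, ← ENNReal.rpow_mul]
  norm_num

/-- **Proposition 2.1, first anisotropic inequality.**
`(∫ |f g|²)^{1/2} ≲ ‖f‖_{L²}^{1/2} ‖∂₁f‖_{L²}^{1/2} ‖g‖_{L²}^{1/2} ‖∂₂g‖_{L²}^{1/2}`. -/
theorem anisotropic_product_estimate :
    ∃ C : ℝ, 0 < C ∧
      ∀ f g : ℝ × ℝ → ℝ,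
        ContDiff ℝ 1 f → ContDiff ℝ 1 g →
        MemLp f 2 volume → MemLp (d1 f) 2 volume →
        MemLp g 2 volume → MemLp (d2 g) 2 volume →
        L2e (fun x => f x * g x) ≤
          ENNReal.ofReal C
            * L2e f ^ ((1 : ℝ) / 2) * L2e (d1 f) ^ ((1 : ℝ) / 2)
            * L2e g ^ ((1 : ℝ) / 2) * L2e (d2 g) ^ ((1 : ℝ) / 2) := by
  refine ⟨2, by norm_num, ?_⟩
  intro f g hf hg hfL2 hd1L2 hgL2 hd2L2
  set F : ℝ → ℝ≥0∞ := fun b => ∫⁻ s, ENNReal.ofReal |f (s,b) * d1 f (s,b)| with hFdef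
  set G : ℝ → ℝ≥0∞ := fun a => ∫⁻ t, ENNReal.ofReal |g (a,t) * d2 g (a,t)| with hGdef
  -- measurability
  have mf2 : Measurable fun x : ℝ × ℝ => ENNReal.ofReal (f x ^ 2) :=
    ((hf.continuous.pow 2).measurable).ennreal_ofReal
  have mg2 : Measurable fun x : ℝ × ℝ => ENNReal.ofReal (g x ^ 2) :=
    ((hg.continuous.pow 2).measurable).ennreal_ofReal
  have mfd : Measurable fun x : ℝ × ℝ => ENNReal.ofReal |f x * d1 f x| :=
    ((hf.continuous.mul (d1_continuous f hf)).abs.measurable).ennreal_ofReal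
  have mgd : Measurable fun x : ℝ × ℝ => ENNReal.ofReal |g x * d2 g x| :=
    ((hg.continuous.mul (d2_continuous g hg)).abs.measurable).ennreal_ofReal
  -- a.e. slice finiteness for f (slices in the first variable, a.e. second variable)
  have hfin2 : ∫⁻ x, ENNReal.ofReal (f x ^ 2) ∂(volume : Measure (ℝ × ℝ)) ≠ ∞ :=
    memL2_lintegral f hfL2
  have hgin2 : ∫⁻ x, ENNReal.ofReal (g x ^ 2) ∂(volume : Measure (ℝ × ℝ)) ≠ ∞ :=
    memL2_lintegral g hgL2
  have hfslice : ∀ᵐ b : ℝ ∂volume, (∫⁻ s, ENNReal.ofReal (f (s,b) ^ 2)) ≠ ∞ := by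
    rw [Measure.volume_eq_prod, lintegral_prod_symm _ mf2.aemeasurable] at hfin2
    have hmeas : Measurable fun b : ℝ => ∫⁻ s, ENNReal.ofReal (f (s,b) ^ 2) :=
      Measurable.lintegral_prod_left (f := fun s b => ENNReal.ofReal (f (s,b) ^ 2)) mf2
    filter_upwards [ae_lt_top hmeas hfin2] with b hb using hb.ne
  have hgslice : ∀ᵐ a : ℝ ∂volume, (∫⁻ t, ENNReal.ofReal (g (a,t) ^ 2)) ≠ ∞ := by
    rw [Measure.volume_eq_prod, lintegral_prod _ mg2.aemeasurable] at hgin2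
    have hmeas : Measurable fun a : ℝ => ∫⁻ t, ENNReal.ofReal (g (a,t) ^ 2) :=
      Measurable.lintegral_prod_right (f := fun a t => ENNReal.ofReal (g (a,t) ^ 2)) mg2
    filter_upwards [ae_lt_top hmeas hgin2] with a ha using ha.ne
  -- pointwise bounds from the 1D lemma
  have hfbound : ∀ᵐ b : ℝ ∂volume, ∀ a : ℝ, ENNReal.ofReal (f (a,b) ^ 2) ≤ 2 * F b := by
    filter_upwards [hfslice] with b hb
    intro a
    exact oneD (fun s => f (s,b)) (slice1_contDiff f hf b) hb a
  have hgbound : ∀ᵐ a : ℝ ∂volume, ∀ b : ℝ, ENNReal.ofReal (g (a,b) ^ 2) ≤ 2 * G a := by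
    filter_upwards [hgslice] with a ha
    intro b
    exact oneD (fun t => g (a,t)) (slice2_contDiff g hg a) ha b
  -- the main Fubini estimate
  set P := ∫⁻ b, F b ∂volume with hPdef
  set Q := ∫⁻ a, G a ∂volume with hQdef
  have main : ∫⁻ x, ENNReal.ofReal ((f x * g x) ^ 2) ∂(volume : Measure (ℝ × ℝ))
      ≤ (2 * P) * (2 * Q) := by
    have step0 : (∫⁻ x, ENNReal.ofReal ((f x * g x) ^ 2) ∂(volume : Measure (ℝ × ℝ)))
        = ∫⁻ x, ENNReal.ofReal (f x ^ 2) * ENNReal.ofReal (g x ^ 2)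
            ∂(volume : Measure (ℝ × ℝ)) :=
      lintegral_congr fun x => by rw [mul_pow, ENNReal.ofReal_mul (sq_nonneg _)]
    rw [step0, Measure.volume_eq_prod, lintegral_prod (fun x => ENNReal.ofReal (f x ^ 2) * ENNReal.ofReal (g x ^ 2)) (mf2.mul mg2).aemeasurable]
    calc ∫⁻ a, ∫⁻ b, ENNReal.ofReal (f (a,b) ^ 2) * ENNReal.ofReal (g (a,b) ^ 2) ∂volume ∂volume
        ≤ ∫⁻ a, (2 * P) * (2 * G a) ∂volume := by
          apply lintegral_mono_ae
          filter_upwards [hgbound] with a ha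
          calc ∫⁻ b, ENNReal.ofReal (f (a,b) ^ 2) * ENNReal.ofReal (g (a,b) ^ 2) ∂volume
              ≤ ∫⁻ b, ENNReal.ofReal (f (a,b) ^ 2) * (2 * G a) ∂volume :=
                lintegral_mono fun b => mul_le_mul_right (ha b) _
            _ = (∫⁻ b, ENNReal.ofReal (f (a,b) ^ 2) ∂volume) * (2 * G a) :=
                lintegral_mul_const'' _ ((mf2.comp (measurable_prodMk_left)).aemeasurable)
            _ ≤ (∫⁻ b, 2 * F b ∂volume) * (2 * G a) :=
                mul_le_mul_left (lintegral_mono_ae (hfbound.mono fun b hb => hb a)) _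
            _ = (2 * P) * (2 * G a) := by rw [lintegral_const_mul' 2 F (by norm_num)]
      _ = (2 * P) * (2 * Q) := by
          rw [lintegral_const_mul'' (2 * P) (f := fun a => 2 * G a) ((measurable_const.mul ?_).aemeasurable),
            lintegral_const_mul' 2 G (by norm_num)]
          exact Measurable.lintegral_prod_right
            (f := fun a t => ENNReal.ofReal |g (a,t) * d2 g (a,t)|) mgd
  -- identify P, Q with product integrals and apply Cauchy-Schwarz
  have hPF : P = ∫⁻ x, ENNReal.ofReal |f x * d1 f x| ∂(volume : Measure (ℝ × ℝ)) := by
    rw [hPdef, Measure.volume_eq_prod, lintegral_prod_symm _ mfd.aemeasurable]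
  have hQG : Q = ∫⁻ x, ENNReal.ofReal |g x * d2 g x| ∂(volume : Measure (ℝ × ℝ)) := by
    rw [hQdef, Measure.volume_eq_prod, lintegral_prod _ mgd.aemeasurable]
  have hP : P ≤ L2e f * L2e (d1 f) := by
    rw [hPF, show L2e f = eLpNorm f 2 volume from rfl,
      show L2e (d1 f) = eLpNorm (d1 f) 2 volume from rfl,
      eLpNorm_two_eq f, eLpNorm_two_eq (d1 f)]
    exact holder_l2 _ f (d1 f) hf.continuous.measurable (d1_continuous f hf).measurable
  have hQ : Q ≤ L2e g * L2e (d2 g) := by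
    rw [hQG, show L2e g = eLpNorm g 2 volume from rfl,
      show L2e (d2 g) = eLpNorm (d2 g) 2 volume from rfl,
      eLpNorm_two_eq g, eLpNorm_two_eq (d2 g)]
    exact holder_l2 _ g (d2 g) hg.continuous.measurable (d2_continuous g hg).measurable
  -- final assembly
  have hL : L2e (fun x => f x * g x)
      = (∫⁻ x, ENNReal.ofReal ((f x * g x) ^ 2) ∂(volume : Measure (ℝ × ℝ))) ^ ((1:ℝ)/2) :=
    eLpNorm_two_eq _
  rw [hL]
  have step1 : (∫⁻ x, ENNReal.ofReal ((f x * g x) ^ 2) ∂(volume : Measure (ℝ × ℝ))) ^ ((1:ℝ)/2)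
      ≤ ((2 * P) * (2 * Q)) ^ ((1:ℝ)/2) :=
    ENNReal.rpow_le_rpow main (by norm_num)
  have step2 : ((2 * P) * (2 * Q)) ^ ((1:ℝ)/2)
      ≤ (4 * ((L2e f * L2e (d1 f)) * (L2e g * L2e (d2 g)))) ^ ((1:ℝ)/2) := by
    apply ENNReal.rpow_le_rpow _ (by norm_num)
    calc (2 * P) * (2 * Q) = 4 * (P * Q) := by ring
      _ ≤ 4 * ((L2e f * L2e (d1 f)) * (L2e g * L2e (d2 g))) := by
          exact mul_le_mul' le_rfl (mul_le_mul' hP hQ)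
  refine (step1.trans step2).trans (le_of_eq ?_)
  rw [ENNReal.mul_rpow_of_nonneg _ _ (by norm_num : (0:ℝ) ≤ 1/2), four_rpow_half,
    ENNReal.mul_rpow_of_nonneg _ _ (by norm_num : (0:ℝ) ≤ 1/2),
    ENNReal.mul_rpow_of_nonneg _ _ (by norm_num : (0:ℝ) ≤ 1/2),
    ENNReal.mul_rpow_of_nonneg _ _ (by norm_num : (0:ℝ) ≤ 1/2),
    show ENNReal.ofReal 2 = 2 by norm_num]
  ring

end
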